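/- Let R be a commutative ring, L a Lie algebra over R, n ≥ 1, and Φ : (Fin n → L) → R an R-multilinear invariant tensor on L (for every x ∈ L and v : Fin n → L, ∑_{p} Φ (Function.update v p ⁅x, v p⁆) = 0). Let S be a commutative semigroup with an absorbing element z (z * s = z for all s ∈ S), and let f : S → R satisfy f z = 0. Define Ψ : (Fin n → Finsupp S L) → R by Ψ g = ∑_{s} f (s 0 * ⋯ * s (n-1)) * Φ (fun i => (g i) (s i)), the sum ranging over tuples s : Fin n → S with s i in the support of g i. Let ⁅·,·⁆' be the unique R-bilinear bracket on Finsupp S L with ⁅Finsupp.single s x, Finsupp.single t y⁆' = 0 if s * t = z and ⁅Finsupp.single s x, Finsupp.single t y⁆' = Finsupp.single (s * t) ⁅x, y⁆ otherwise (the 0_S-reduced bracket). Then Ψ is an invariant tensor for the 0_S-reduced algebra: for every w ∈ Finsupp S L and every g : Fin n → Finsupp S L, ∑_{p : Fin n} Ψ (Function.update g p ⁅w, g p⁆') = 0. -/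

import Mathlib

/-- The ordered product `s 0 * s 1 * ⋯ * s n` of a tuple of `n+1` elements of
a semigroup (which need not have an identity). -/
def finSemigroupProd {S : Type*} [Mul S] {n : ℕ} (s : Fin (n + 1) → S) : S :=
  (List.ofFn fun i : Fin n => s i.succ).foldl (· * ·) (s 0)

section aux
variable {S : Type*} [CommSemigroup S] {n : ℕ}

lemma foldl_coe (l : List S) (a : S) :
    ((l.foldl (· * ·) a : S) : WithOne S)
      = (a : WithOne S) * (l.map (fun x : S => (x : WithOne S))).prod := by
  induction l generalizing a with
  | nil => simp
  | cons b l ih =>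
      simp only [List.foldl_cons, List.map_cons, List.prod_cons, ih (a * b),
        WithOne.coe_mul, mul_assoc]

lemma coe_finSemigroupProd (s : Fin (n + 1) → S) :
    ((finSemigroupProd s : S) : WithOne S) = ∏ i, (s i : WithOne S) := by
  rw [finSemigroupProd, foldl_coe, List.map_ofFn, Fin.prod_univ_succ]
  simp [List.prod_ofFn, Function.comp]

lemma finSemigroupProd_update (s : Fin (n + 1) → S) (p : Fin (n + 1)) (u : S) :
    finSemigroupProd (Function.update s p (u * s p)) = u * finSemigroupProd s := by
  rw [← WithOne.coe_inj, WithOne.coe_mul, coe_finSemigroupProd, coe_finSemigroupProd]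
  have h : (fun i => ((Function.update s p (u * s p) i : S) : WithOne S))
      = Function.update (fun i => (s i : WithOne S)) p ((u * s p : S) : WithOne S) := by
    funext i
    exact Function.apply_update (fun _ (x : S) => (x : WithOne S)) s p (u * s p) i
  rw [h, Finset.prod_update_of_mem (Finset.mem_univ p),
    Finset.prod_eq_mul_prod_sdiff_singleton_of_mem (Finset.mem_univ p) (fun i => (s i : WithOne S)),
    WithOne.coe_mul, mul_assoc]

lemma finSemigroupProd_eq_z {z : S} (hz : ∀ t : S, z * t = z)
    (s : Fin (n + 1) → S) (p : Fin (n + 1)) (hp : s p = z) :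
    finSemigroupProd s = z := by
  have h := finSemigroupProd_update s p z
  have h2 : Function.update s p (z * s p) = s := by
    rw [hp, hz z, ← hp]; exact Function.update_eq_self p s
  rw [h2] at h
  rw [h, hz]

lemma update_congr_off {α : Type*} {m : ℕ} (v v' : Fin m → α) (p : Fin m) (c : α)
    (h : ∀ i, i ≠ p → v i = v' i) :
    Function.update v p c = Function.update v' p c := by
  funext i
  rcases eq_or_ne i p with rfl | hi
  · simp
  · simp [Function.update_of_ne hi, h i hi]

end aux


/-- **Invariant tensors for `0_S`-reduced algebras** (Theorem 5 of the paper).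
Let `Φ` be an `R`-multilinear invariant tensor of rank `n+1 ≥ 1` on a Lie
algebra `L`, let `z` be an absorbing element of the commutative semigroup `S`,
let `f : S → R` satisfy `f z = 0`, and define
`Ψ g = ∑_{s, s i ∈ (g i).support} f (s 0 * ⋯ * s n) * Φ (fun i => g i (s i))`.
Let `B'` be the `0_S`-reduced bracket on `S →₀ L`, i.e. the `R`-bilinear map
with `B' (single s x) (single t y) = 0` if `s * t = z` and
`= single (s * t) ⁅x, y⁆` otherwise.  Then `Ψ` is an invariant tensor for the
`0_S`-reduced algebra. -/
theorem zeroReduced_invariant_tensor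
    (R : Type*) [CommRing R] (L : Type*) [LieRing L] [LieAlgebra R L]
    (S : Type*) [CommSemigroup S] [DecidableEq S]
    (n : ℕ)
    (Φ : MultilinearMap R (fun _ : Fin (n + 1) => L) R)
    (hΦ : ∀ (x : L) (v : Fin (n + 1) → L),
      ∑ p : Fin (n + 1), Φ (Function.update v p ⁅x, v p⁆) = 0)
    (z : S) (hz : ∀ s : S, z * s = z)
    (f : S → R) (hf : f z = 0)
    (B' : (S →₀ L) →ₗ[R] (S →₀ L) →ₗ[R] (S →₀ L))
    (hB' : ∀ (s t : S) (x y : L),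
      B' (Finsupp.single s x) (Finsupp.single t y)
        = if s * t = z then 0 else Finsupp.single (s * t) ⁅x, y⁆)
    (Ψ : (Fin (n + 1) → (S →₀ L)) → R)
    (hΨ : ∀ g : Fin (n + 1) → (S →₀ L),
      Ψ g = ∑ s ∈ Fintype.piFinset (fun i => (g i).support),
        f (finSemigroupProd s) * Φ (fun i => (g i) (s i))) :
    ∀ (w : S →₀ L) (g : Fin (n + 1) → (S →₀ L)),
      ∑ p : Fin (n + 1), Ψ (Function.update g p (B' w (g p))) = 0 := by
  classical
  -- the formula for Ψ is valid over any superset of the supports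
  have key : ∀ (g : Fin (n + 1) → (S →₀ L)) (A : Fin (n + 1) → Finset S),
      (∀ i, (g i).support ⊆ A i) →
      Ψ g = ∑ s ∈ Fintype.piFinset A,
        f (finSemigroupProd s) * Φ (fun i => (g i) (s i)) := by
    intro g A hA
    rw [hΨ g]
    refine Finset.sum_subset (Fintype.piFinset_subset _ _ hA) ?_
    intro s hs hns
    obtain ⟨i, hi⟩ : ∃ i, s i ∉ (g i).support := by
      by_contra h
      push_neg at h
      exact hns (Fintype.mem_piFinset.mpr h)
    rw [Φ.map_coord_zero (m := fun i => (g i) (s i)) i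
      (Finsupp.notMem_support_iff.mp hi), mul_zero]
  -- rewriting the argument of Φ in `update` form
  have argupd : ∀ (g : Fin (n + 1) → (S →₀ L)) (p : Fin (n + 1)) (h : S →₀ L)
      (s : Fin (n + 1) → S),
      (fun i => (Function.update g p h i) (s i))
        = Function.update (fun i => (g i) (s i)) p (h (s p)) := by
    intro g p h s
    funext i
    exact Function.apply_update (fun j (F : S →₀ L) => F (s j)) g p h i
  -- Ψ is additive in each slot
  have Ψzero : ∀ (g : Fin (n + 1) → (S →₀ L)) (p : Fin (n + 1)),
      Ψ (Function.update g p 0) = 0 := by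
    intro g p
    rw [hΨ]
    refine Finset.sum_eq_zero fun s hs => ?_
    have h := Fintype.mem_piFinset.mp hs p
    simp at h
  have Ψadd : ∀ (g : Fin (n + 1) → (S →₀ L)) (p : Fin (n + 1)) (h₁ h₂ : S →₀ L),
      Ψ (Function.update g p (h₁ + h₂))
        = Ψ (Function.update g p h₁) + Ψ (Function.update g p h₂) := by
    intro g p h₁ h₂
    set A : Fin (n + 1) → Finset S :=
      Function.update (fun i => (g i).support) p (h₁.support ∪ h₂.support) with hAdef
    have hsub : ∀ h : S →₀ L, h.support ⊆ h₁.support ∪ h₂.support →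
        ∀ i, ((Function.update g p h i).support ⊆ A i) := by
      intro h hh i
      rcases eq_or_ne i p with rfl | hip
      · simpa [A] using hh
      · simp [A, Function.update_of_ne hip]
    rw [key _ A (hsub _ Finsupp.support_add),
        key _ A (hsub h₁ Finset.subset_union_left),
        key _ A (hsub h₂ Finset.subset_union_right),
        ← Finset.sum_add_distrib]
    refine Finset.sum_congr rfl fun s hs => ?_
    rw [argupd, argupd, argupd, Finsupp.add_apply, MultilinearMap.map_update_add, mul_add]
  have Ψsum : ∀ (g : Fin (n + 1) → (S →₀ L)) (p : Fin (n + 1))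
      (J : Finset S) (h : S → (S →₀ L)),
      Ψ (Function.update g p (∑ j ∈ J, h j))
        = ∑ j ∈ J, Ψ (Function.update g p (h j)) := by
    intro g p J h
    induction J using Finset.induction_on with
    | empty => simpa using Ψzero g p
    | insert x J hx ih =>
        rw [Finset.sum_insert hx, Finset.sum_insert hx, Ψadd, ih]
  -- expansion of the bracket
  have Bexp : ∀ (w h : S →₀ L), B' w h
      = ∑ u ∈ w.support, ∑ t ∈ h.support,
          (if u * t = z then (0 : S →₀ L) else Finsupp.single (u * t) ⁅w u, h t⁆) := by
    intro w h
    conv_lhs => rw [← Finsupp.sum_single w]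
    rw [Finsupp.sum, map_sum, LinearMap.sum_apply]
    refine Finset.sum_congr rfl fun u hu => ?_
    conv_lhs => rw [← Finsupp.sum_single h]
    rw [Finsupp.sum, map_sum]
    exact Finset.sum_congr rfl fun t ht => hB' u t (w u) (h t)
  intro w g
  set D : Fin (n + 1) → Finset S := fun i => (g i).support with hD
  have main : ∀ p : Fin (n + 1),
      Ψ (Function.update g p (B' w (g p)))
        = ∑ u ∈ w.support, ∑ s ∈ Fintype.piFinset D,
            f (u * finSemigroupProd s) *
              Φ (Function.update (fun i => (g i) (s i)) p ⁅w u, (g p) (s p)⁆) := by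
    intro p
    rw [Bexp w (g p), Ψsum g p w.support]
    refine Finset.sum_congr rfl fun u hu => ?_
    rw [Ψsum g p (g p).support]
    have ht : ∀ t ∈ (g p).support,
        Ψ (Function.update g p
            (if u * t = z then (0 : S →₀ L) else Finsupp.single (u * t) ⁅w u, (g p) t⁆))
          = ∑ s ∈ Fintype.piFinset (Function.update D p {u * t}),
              f (finSemigroupProd s) *
                Φ (Function.update (fun i => (g i) (s i)) p ⁅w u, (g p) t⁆) := by
      intro t htt
      by_cases hzt : u * t = z
      · rw [if_pos hzt, Ψzero g p]
        symm
        refine Finset.sum_eq_zero fun s hs => ?_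
        have hsp : s p = u * t := by
          have h := Fintype.mem_piFinset.mp hs p
          simpa using h
        rw [finSemigroupProd_eq_z hz s p (by rw [hsp, hzt]), hf, zero_mul]
      · rw [if_neg hzt,
          key _ (Function.update D p {u * t}) ?_]
        · refine Finset.sum_congr rfl fun s hs => ?_
          have hsp : s p = u * t := by
            have h := Fintype.mem_piFinset.mp hs p
            simpa using h
          rw [argupd, hsp, Finsupp.single_eq_same]
        · intro i
          rcases eq_or_ne i p with rfl | hip
          · simpa using Finsupp.support_single_subset
          · simp [Function.update_of_ne hip, D]
    rw [Finset.sum_congr rfl ht, Finset.sum_sigma']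
    refine Finset.sum_bij'
      (fun (a : Σ _ : S, Fin (n + 1) → S) _ => Function.update a.2 p a.1)
      (fun (s : Fin (n + 1) → S) _ =>
        (⟨s p, Function.update s p (u * s p)⟩ : Σ _ : S, Fin (n + 1) → S))
      ?_ ?_ ?_ ?_ ?_
    · rintro ⟨t, s⟩ ha
      rw [Finset.mem_sigma] at ha
      refine Fintype.mem_piFinset.mpr fun i => ?_
      show Function.update s p t i ∈ D i
      rcases eq_or_ne i p with rfl | hip
      · rw [Function.update_self]
        exact ha.1
      · rw [Function.update_of_ne hip]
        have h := Fintype.mem_piFinset.mp ha.2 i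
        rwa [Function.update_of_ne hip] at h
    · intro s hs
      rw [Finset.mem_sigma]
      constructor
      · exact Fintype.mem_piFinset.mp hs p
      · show Function.update s p (u * s p) ∈
          Fintype.piFinset (Function.update D p {u * s p})
        refine Fintype.mem_piFinset.mpr fun i => ?_
        rcases eq_or_ne i p with rfl | hip
        · simp
        · rw [Function.update_of_ne hip, Function.update_of_ne hip]
          exact Fintype.mem_piFinset.mp hs i
    · rintro ⟨t, s⟩ ha
      rw [Finset.mem_sigma] at ha
      have hsp : s p = u * t := by
        have h := Fintype.mem_piFinset.mp ha.2 p
        simpa using h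
      show (⟨Function.update s p t p,
          Function.update (Function.update s p t) p
            (u * Function.update s p t p)⟩ : Σ _ : S, Fin (n + 1) → S) = ⟨t, s⟩
      simp only [Function.update_self, Function.update_idem]
      rw [← hsp, Function.update_eq_self]
    · intro s hs
      show Function.update
          (Function.update s p (u * s p)) p
          ((⟨s p, Function.update s p (u * s p)⟩ : Σ _ : S, Fin (n + 1) → S).1) = s
      simp only [Function.update_idem]
      rw [Function.update_eq_self]
    · rintro ⟨t, s⟩ ha
      rw [Finset.mem_sigma] at ha
      have hsp : s p = u * t := by
        have h := Fintype.mem_piFinset.mp ha.2 p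
        simpa using h
      show f (finSemigroupProd s) *
          Φ (Function.update (fun i => (g i) (s i)) p ⁅w u, (g p) t⁆)
        = f (u * finSemigroupProd (Function.update s p t)) *
          Φ (Function.update (fun i => (g i) (Function.update s p t i)) p
              ⁅w u, (g p) (Function.update s p t p)⁆)
      have h1 : f (finSemigroupProd s)
          = f (u * finSemigroupProd (Function.update s p t)) := by
        rw [← finSemigroupProd_update (Function.update s p t) p u]
        congr 1
        rw [Function.update_self, Function.update_idem, ← hsp, Function.update_eq_self]
      have h2 : Function.update (fun i => (g i) (s i)) p ⁅w u, (g p) t⁆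
          = Function.update (fun i => (g i) (Function.update s p t i)) p
              ⁅w u, (g p) (Function.update s p t p)⁆ := by
        rw [Function.update_self]
        refine update_congr_off _ _ p _ fun i hip => ?_
        rw [Function.update_of_ne hip]
      rw [h1, h2]
  rw [Finset.sum_congr rfl fun p _ => main p, Finset.sum_comm]
  refine Finset.sum_eq_zero fun u hu => ?_
  rw [Finset.sum_comm]
  refine Finset.sum_eq_zero fun s hs => ?_
  rw [← Finset.mul_sum]
  have h0 := hΦ (w u) (fun i => (g i) (s i))
  rw [h0, mul_zero]
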